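/- Weak Aggregating Algorithm regret bound (as used in MHA): Let l be a loss function on Y × Λ × X with values in a bounded interval, convex in its first argument, and let experts indexed by a countable set output points y^i_{k,h} ∈ Y at each round i. If the learner plays the weighted average y_n = Σ_{k,h} p_n^{(k,h)} y^n_{k,h} with weights p_n^{(k,h)} ∝ α_{k,h} exp(−(1/√n) Σ_{i≤n−1} l(y^i_{k,h}, λ_i, x_i)) for a prior (α_{k,h}) with Σ α_{k,h} = 1 and α_{k,h} > 0, then for every expert (k, h) and every N, (1/N) Σ_{i=1}^N l(y_i, λ_i, x_i) ≤ (1/N) Σ_{i=1}^N l(y^i_{k,h}, λ_i, x_i) + C_{k,h}/√N, where C_{k,h} depends only on the loss bound and α_{k,h}. -/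

import Mathlib

open Filter Topology

section waaAux

variable {E : Type*} [NormedAddCommGroup E] [NormedSpace ℝ E] {ι : Type*}

private lemma waa_finmem {Y : Set E} (hYconv : Convex ℝ Y) {q : ι → ℝ}
    (hq0 : ∀ i, 0 ≤ q i) {z : ι → E} (hz : ∀ i, z i ∈ Y) (F : Finset ι)
    (hs : 0 < ∑ i ∈ F, q i) :
    (∑ i ∈ F, q i)⁻¹ • ∑ i ∈ F, q i • z i ∈ Y := by
  have h1 : ∑ i ∈ F, (∑ j ∈ F, q j)⁻¹ * q i = 1 := by
    rw [← Finset.mul_sum, inv_mul_cancel₀ hs.ne']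
  have h2 := hYconv.sum_mem (t := F) (w := fun i => (∑ j ∈ F, q j)⁻¹ * q i)
    (fun i _ => mul_nonneg (inv_nonneg.2 hs.le) (hq0 i)) h1 (fun i _ => hz i)
  rw [Finset.smul_sum]
  simpa [mul_smul] using h2

private lemma waa_mem {Y : Set E} (hYc : IsClosed Y) (hYconv : Convex ℝ Y)
    (hYne : Y.Nonempty) {q : ι → ℝ} (hq0 : ∀ i, 0 ≤ q i) (hq1 : HasSum q 1)
    {z : ι → E} (hz : ∀ i, z i ∈ Y) {S : E} (hS : HasSum (fun i => q i • z i) S) :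
    S ∈ Y := by
  cases isEmpty_or_nonempty ι with
  | inl h => exact absurd (hq1.unique hasSum_empty) one_ne_zero
  | inr h =>
  obtain ⟨z₀, hz₀⟩ := hYne
  have hcmem : ∀ F : Finset ι,
      (∑ i ∈ F, q i • z i) + (1 - ∑ i ∈ F, q i) • z₀ ∈ Y := by
    intro F
    rcases (Finset.sum_nonneg fun i _ => hq0 i).eq_or_lt with h0 | h0
    · have hq' : ∀ i ∈ F, q i = 0 :=
        (Finset.sum_eq_zero_iff_of_nonneg (fun i _ => hq0 i)).1 h0.symm
      have hz0 : ∑ i ∈ F, q i • z i = 0 :=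
        Finset.sum_eq_zero fun i hi => by rw [hq' i hi, zero_smul]
      rw [hz0, ← h0]
      simpa using hz₀
    · have hw := waa_finmem hYconv hq0 hz F h0
      have := hYconv hw hz₀ h0.le
        (sub_nonneg.2 (sum_le_hasSum F (fun i _ => hq0 i) hq1)) (by ring)
      rwa [smul_inv_smul₀ h0.ne'] at this
  have h2 : Tendsto (fun F : Finset ι => (1 - ∑ i ∈ F, q i) • z₀) atTop
      (𝓝 ((1 - 1 : ℝ) • z₀)) := (tendsto_const_nhds.sub hq1).smul_const z₀
  have h3 : Tendsto
      (fun F : Finset ι => (∑ i ∈ F, q i • z i) + (1 - ∑ i ∈ F, q i) • z₀)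
      atTop (𝓝 S) := by
    simpa using Filter.Tendsto.add hS h2
  exact hYc.mem_of_tendsto h3 (Eventually.of_forall hcmem)

private lemma waa_jensen {Y : Set E} (hYc : IsClosed Y) (hYconv : Convex ℝ Y)
    (hYne : Y.Nonempty) {f : E → ℝ} (hf : ConvexOn ℝ Y f) {b : ℝ}
    (hfb : ∀ u ∈ Y, f u ≤ b) {q : ι → ℝ} (hq0 : ∀ i, 0 < q i) (hq1 : HasSum q 1)
    {z : ι → E} (hz : ∀ i, z i ∈ Y) {S : E} (hS : HasSum (fun i => q i • z i) S)
    {A : ℝ} (hA : HasSum (fun i => q i * f (z i)) A) : f S ≤ A := by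
  cases isEmpty_or_nonempty ι with
  | inl h => exact absurd (hq1.unique hasSum_empty) one_ne_zero
  | inr h =>
  have hSY : S ∈ Y := waa_mem hYc hYconv ⟨_, hz (Classical.arbitrary ι)⟩
    (fun i => (hq0 i).le) hq1 hz hS
  have key : ∀ F : Finset ι,
      f S ≤ (∑ i ∈ F, q i * f (z i)) + (1 - ∑ i ∈ F, q i) * b := by
    intro F
    have hsle : ∑ i ∈ F, q i ≤ 1 := sum_le_hasSum F (fun i _ => (hq0 i).le) hq1
    have hqc : HasSum (fun i : {x // x ∉ F} => q i) (1 - ∑ i ∈ F, q i) := by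
      refine (Finset.hasSum_compl_iff F).2 ?_
      rwa [sub_add_cancel]
    have ht0 : 0 ≤ 1 - ∑ i ∈ F, q i :=
      hasSum_le (f := fun _ : {x // x ∉ F} => (0:ℝ)) (fun i => (hq0 i).le)
        hasSum_zero hqc
    rcases ht0.eq_or_lt with ht | ht
    · -- tail is zero: all indices are in F
      have hFall : ∀ i, i ∈ F := by
        by_contra hcon
        push_neg at hcon
        obtain ⟨i, hi⟩ := hcon
        have h1 : q i ≤ 1 - ∑ i ∈ F, q i :=
          le_hasSum hqc ⟨i, hi⟩ (fun j _ => (hq0 j).le)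
        rw [← ht] at h1
        exact absurd h1 (hq0 i).not_ge
      have hSs : S = ∑ i ∈ F, q i • z i :=
        hS.unique (hasSum_sum_of_ne_finset_zero
          (fun i hi => absurd (hFall i) hi))
      have hs1 : ∑ i ∈ F, q i = 1 := by linarith
      calc f S = f (∑ i ∈ F, q i • z i) := by rw [hSs]
        _ ≤ ∑ i ∈ F, q i • f (z i) :=
            hf.map_sum_le (fun i _ => (hq0 i).le) hs1 (fun i _ => hz i)
        _ = (∑ i ∈ F, q i * f (z i)) + (1 - ∑ i ∈ F, q i) * b := by
            rw [← ht, zero_mul, add_zero]; rfl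
    · -- positive tail
      have hzsum : HasSum (fun i : {x // x ∉ F} => q i • z i)
          (S - ∑ i ∈ F, q i • z i) := by
        refine (Finset.hasSum_compl_iff (f := fun i => q i • z i) F).2 ?_
        rwa [sub_add_cancel]
      set t := 1 - ∑ i ∈ F, q i with htdef
      set T := S - ∑ i ∈ F, q i • z i with hTdef
      have hq1' : HasSum (fun i : {x // x ∉ F} => t⁻¹ * q i) 1 := by
        have := hqc.mul_left t⁻¹
        rwa [inv_mul_cancel₀ ht.ne'] at this
      have hz'mem : t⁻¹ • T ∈ Y := by
        refine waa_mem hYc hYconv hYne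
          (fun i => mul_nonneg (inv_nonneg.2 ht.le) (hq0 _).le) hq1'
          (fun i : {x // x ∉ F} => hz i) ?_
        have := hzsum.const_smul t⁻¹
        simpa [smul_smul] using this
      have hdecomp : (∑ i ∈ F, q i • z i) + t • (t⁻¹ • T) = S := by
        rw [smul_inv_smul₀ ht.ne', hTdef]
        abel
      rcases Finset.eq_empty_or_nonempty F with rfl | hFne
      · have ht1 : t = 1 := by simp [htdef]
        simpa [ht1] using hfb S hSY
      · have hsp : 0 < ∑ i ∈ F, q i := Finset.sum_pos (fun i _ => hq0 i) hFne
        have hw := waa_finmem hYconv (fun i => (hq0 i).le) hz F hsp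
        have hcstep := hf.2 hw hz'mem hsp.le ht.le (by rw [htdef]; ring)
        rw [smul_inv_smul₀ hsp.ne'] at hcstep
        rw [hdecomp] at hcstep
        have hjen : f ((∑ i ∈ F, q i)⁻¹ • ∑ i ∈ F, q i • z i)
            ≤ ∑ i ∈ F, ((∑ j ∈ F, q j)⁻¹ * q i) * f (z i) := by
          have h1 : ∑ i ∈ F, (∑ j ∈ F, q j)⁻¹ * q i = 1 := by
            rw [← Finset.mul_sum, inv_mul_cancel₀ hsp.ne']
          have := hf.map_sum_le (w := fun i => (∑ j ∈ F, q j)⁻¹ * q i)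
            (fun i _ => mul_nonneg (inv_nonneg.2 hsp.le) (hq0 i).le) h1
            (fun i _ => hz i)
          simpa [mul_smul, ← Finset.smul_sum] using this
        have hterm : (∑ i ∈ F, q i) * ∑ i ∈ F, ((∑ j ∈ F, q j)⁻¹ * q i) * f (z i)
            = ∑ i ∈ F, q i * f (z i) := by
          rw [Finset.mul_sum]
          refine Finset.sum_congr rfl fun i _ => ?_
          field_simp
        have h4 : (∑ i ∈ F, q i) * f ((∑ i ∈ F, q i)⁻¹ • ∑ i ∈ F, q i • z i)
            ≤ ∑ i ∈ F, q i * f (z i) := by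
          calc (∑ i ∈ F, q i) * f ((∑ i ∈ F, q i)⁻¹ • ∑ i ∈ F, q i • z i)
              ≤ (∑ i ∈ F, q i) * ∑ i ∈ F, ((∑ j ∈ F, q j)⁻¹ * q i) * f (z i) :=
                mul_le_mul_of_nonneg_left hjen hsp.le
            _ = ∑ i ∈ F, q i * f (z i) := hterm
        have h5 : t * f (t⁻¹ • T) ≤ t * b :=
          mul_le_mul_of_nonneg_left (hfb _ hz'mem) ht.le
        calc f S ≤ (∑ i ∈ F, q i) * f ((∑ i ∈ F, q i)⁻¹ • ∑ i ∈ F, q i • z i)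
              + t * f (t⁻¹ • T) := hcstep
          _ ≤ (∑ i ∈ F, q i * f (z i)) + t * b := add_le_add h4 h5
  have hlim : Tendsto
      (fun F : Finset ι => (∑ i ∈ F, q i * f (z i)) + (1 - ∑ i ∈ F, q i) * b)
      atTop (𝓝 (A + (1 - 1) * b)) :=
    Filter.Tendsto.add hA ((tendsto_const_nhds.sub hq1).mul_const b)
  have := ge_of_tendsto hlim (Eventually.of_forall key)
  simpa using this

end waaAux

section waaAux2

open Real

private lemma waa_pow {ι : Type*} {α : ι → ℝ} (hα0 : ∀ i, 0 ≤ α i)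
    (hα1 : HasSum α 1) {u : ι → ℝ} (hu0 : ∀ i, 0 ≤ u i) (hu1 : ∀ i, u i ≤ 1)
    {θ : ℝ} (hθ0 : 0 < θ) (hθ1 : θ ≤ 1) :
    ∑' i, α i * u i ^ θ ≤ (∑' i, α i * u i) ^ θ := by
  have huθ1 : ∀ i, u i ^ θ ≤ 1 := fun i => Real.rpow_le_one (hu0 i) (hu1 i) hθ0.le
  have huθ0 : ∀ i, 0 ≤ u i ^ θ := fun i => Real.rpow_nonneg (hu0 i) θ
  have hsum1 : Summable fun i => α i * u i :=
    hα1.summable.of_nonneg_of_le (fun i => mul_nonneg (hα0 i) (hu0 i))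
      (fun i => by nlinarith [hα0 i, hu0 i, hu1 i])
  have hsum2 : Summable fun i => α i * u i ^ θ :=
    hα1.summable.of_nonneg_of_le (fun i => mul_nonneg (hα0 i) (huθ0 i))
      (fun i => by nlinarith [hα0 i, huθ0 i, huθ1 i])
  have htsum_nn : 0 ≤ ∑' i, α i * u i :=
    tsum_nonneg fun i => mul_nonneg (hα0 i) (hu0 i)
  refine hsum2.tsum_le_of_sum_le fun F => ?_
  rcases (Finset.sum_nonneg (fun i (_ : i ∈ F) => hα0 i)).eq_or_lt with h0 | h0
  · have hq' : ∀ i ∈ F, α i = 0 :=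
      (Finset.sum_eq_zero_iff_of_nonneg (fun i _ => hα0 i)).1 h0.symm
    have : ∑ i ∈ F, α i * u i ^ θ = 0 :=
      Finset.sum_eq_zero fun i hi => by rw [hq' i hi, zero_mul]
    rw [this]
    exact Real.rpow_nonneg htsum_nn θ
  · set s := ∑ i ∈ F, α i with hsdef
    have hsle : s ≤ 1 := sum_le_hasSum F (fun i _ => hα0 i) hα1
    have hp1 : (1:ℝ) ≤ 1 / θ := by
      rw [le_div_iff₀ hθ0]; linarith
    have hmean := Real.arith_mean_le_rpow_mean F (fun i => α i / s)
      (fun i => u i ^ θ) (fun i _ => div_nonneg (hα0 i) h0.le)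
      (by rw [← Finset.sum_div, hsdef, div_self h0.ne']) (fun i _ => huθ0 i) hp1
    have heq1 : ∀ i, (u i ^ θ) ^ (1/θ) = u i := by
      intro i
      rw [← Real.rpow_mul (hu0 i), mul_one_div, div_self hθ0.ne', Real.rpow_one]
    simp only [heq1] at hmean
    -- hmean : ∑ (α i / s) * u i ^ θ ≤ (∑ (α i / s) * u i) ^ (1 / (1/θ))
    rw [one_div_one_div] at hmean
    have hmul := mul_le_mul_of_nonneg_left hmean h0.le
    have hL : s * ∑ i ∈ F, (α i / s) * u i ^ θ = ∑ i ∈ F, α i * u i ^ θ := by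
      rw [Finset.mul_sum]
      exact Finset.sum_congr rfl fun i _ => by field_simp
    have hsum_div : ∑ i ∈ F, (α i / s) * u i = s⁻¹ * ∑ i ∈ F, α i * u i := by
      rw [Finset.mul_sum]
      exact Finset.sum_congr rfl fun i _ => by field_simp
    rw [hL, hsum_div] at hmul
    have hFle : ∑ i ∈ F, α i * u i ≤ ∑' i, α i * u i :=
      hsum1.sum_le_tsum F (fun i _ => mul_nonneg (hα0 i) (hu0 i))
    have hFnn : 0 ≤ ∑ i ∈ F, α i * u i :=
      Finset.sum_nonneg fun i _ => mul_nonneg (hα0 i) (hu0 i)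
    calc ∑ i ∈ F, α i * u i ^ θ
        ≤ s * (s⁻¹ * ∑ i ∈ F, α i * u i) ^ θ := hmul
      _ = s ^ (1 - θ) * (∑ i ∈ F, α i * u i) ^ θ := by
          have hpow : s * (s ^ θ)⁻¹ = s ^ (1 - θ) := by
            rw [← Real.rpow_neg h0.le]
            nth_rewrite 1 [← Real.rpow_one s]
            rw [← Real.rpow_add h0]
            ring_nf
          rw [Real.mul_rpow (inv_nonneg.2 h0.le) hFnn, Real.inv_rpow h0.le,
            ← mul_assoc, hpow]
      _ ≤ 1 * (∑' i, α i * u i) ^ θ := by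
          refine mul_le_mul ?_ ?_ (Real.rpow_nonneg hFnn θ) zero_le_one
          · exact Real.rpow_le_one h0.le hsle (by linarith)
          · exact Real.rpow_le_rpow hFnn hFle hθ0.le
      _ = (∑' i, α i * u i) ^ θ := one_mul _

private lemma waa_exp_quad {v : ℝ} (hv : 0 ≤ v) :
    Real.exp (-v) ≤ 1 - v + v ^ 2 := by
  have h1 : (0:ℝ) < 1 + v := by linarith
  have h2 : 1 + v ≤ Real.exp v := by
    have := Real.add_one_le_exp v; linarith
  have h3 : Real.exp (-v) ≤ (1 + v)⁻¹ := by
    rw [Real.exp_neg]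
    exact inv_anti₀ h1 h2
  refine h3.trans ?_
  rw [inv_eq_one_div, div_le_iff₀ h1]
  nlinarith [pow_nonneg hv 3]

private lemma waa_sqrt_sum : ∀ N : ℕ,
    ∑ i ∈ Finset.range N, 1 / Real.sqrt (i + 1) ≤ 2 * Real.sqrt N := by
  intro N
  induction N with
  | zero => simp
  | succ n ih =>
    rw [Finset.sum_range_succ]
    have h1 : 1 / Real.sqrt (n + 1) ≤ 2 * Real.sqrt (n + 1) - 2 * Real.sqrt n := by
      have hs1 : (0:ℝ) < Real.sqrt (n + 1) := Real.sqrt_pos.2 (by positivity)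
      have hs0 : (0:ℝ) ≤ Real.sqrt n := Real.sqrt_nonneg n
      have hsq1 : Real.sqrt (n+1) ^ 2 = (n:ℝ)+1 := Real.sq_sqrt (by positivity)
      have hsq0 : Real.sqrt n ^ 2 = (n:ℝ) := Real.sq_sqrt (by positivity)
      rw [div_le_iff₀ hs1]
      nlinarith [sq_nonneg (Real.sqrt (n+1) - Real.sqrt n)]
    push_cast
    push_cast at ih
    linarith
end waaAux2

set_option maxHeartbeats 1000000 in
/-- The Weak Aggregating Algorithm regret bound, as used in MHA: the learner playing the
exponentially-weighted average (learning rate `1/√n`) of countably many experts suffers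
average loss at most that of any expert `(k,h)` plus `C_{k,h}/√N`, where `C_{k,h}` depends
only on the loss bound and the prior weight `α_{k,h}`. -/
theorem stmt16 {m : ℕ} {Λ X : Type*}
    (Y : Set (EuclideanSpace ℝ (Fin m))) (hYc : IsCompact Y) (hYconv : Convex ℝ Y)
    (hYne : Y.Nonempty)
    (l : EuclideanSpace ℝ (Fin m) → Λ → X → ℝ)
    (a b : ℝ) (hbdd : ∀ y ∈ Y, ∀ (lam : Λ) (x : X), l y lam x ∈ Set.Icc a b)
    (hconv : ∀ (lam : Λ) (x : X), ConvexOn ℝ Y fun y => l y lam x)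
    (α : ℕ × ℕ → ℝ) (hαpos : ∀ p, 0 < α p) (hαsum : HasSum α 1)
    (yE : ℕ × ℕ → ℕ → EuclideanSpace ℝ (Fin m)) (hyE : ∀ p i, yE p i ∈ Y)
    (lam : ℕ → Λ) (x : ℕ → X)
    (w : ℕ → ℕ × ℕ → ℝ)
    (hw : ∀ n p, w n p = α p * Real.exp
      (-(∑ i ∈ Finset.range n, l (yE p i) (lam i) (x i)) / Real.sqrt n))
    (y : ℕ → EuclideanSpace ℝ (Fin m))
    (hy : ∀ n, y n = ∑' p : ℕ × ℕ, (w n p / ∑' p' : ℕ × ℕ, w n p') • yE p n) :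
    ∀ p : ℕ × ℕ, ∃ C : ℝ, ∀ N : ℕ, 1 ≤ N →
      (1 / (N : ℝ)) * ∑ i ∈ Finset.range N, l (y i) (lam i) (x i)
        ≤ (1 / (N : ℝ)) * ∑ i ∈ Finset.range N, l (yE p i) (lam i) (x i)
          + C / Real.sqrt N := by
  intro p₀
  classical
  -- basic facts
  have hab : a ≤ b := by
    obtain ⟨y₀, hy₀⟩ := hYne
    have h := hbdd y₀ hy₀ (lam 0) (x 0)
    exact h.1.trans h.2
  set B : ℝ := b - a with hBdef
  have hB0 : 0 ≤ B := sub_nonneg.2 hab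
  obtain ⟨M, hM⟩ : ∃ M, ∀ u ∈ Y, ‖u‖ ≤ M :=
    isBounded_iff_forall_norm_le.1 hYc.isBounded
  -- shifted losses
  set g : ℕ → ℕ × ℕ → ℝ := fun i p => l (yE p i) (lam i) (x i) - a with hgdef
  have hg0 : ∀ i p, 0 ≤ g i p := fun i p => sub_nonneg.2 (hbdd _ (hyE p i) _ _).1
  have hgB : ∀ i p, g i p ≤ B := fun i p => sub_le_sub_right (hbdd _ (hyE p i) _ _).2 a
  set G : ℕ × ℕ → ℕ → ℝ := fun p n => ∑ i ∈ Finset.range n, g i p with hGdef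
  have hG0 : ∀ p n, 0 ≤ G p n := fun p n => Finset.sum_nonneg fun i _ => hg0 i p
  -- tilted masses
  set v : ℝ → ℕ → ℕ × ℕ → ℝ := fun t k p => α p * Real.exp (-(t * G p k)) with hvdef
  have hv_pos : ∀ t k p, 0 < v t k p := fun t k p => mul_pos (hαpos p) (Real.exp_pos _)
  have hv_le : ∀ t k p, 0 ≤ t → v t k p ≤ α p := by
    intro t k p ht
    have : Real.exp (-(t * G p k)) ≤ 1 :=
      Real.exp_le_one_iff.2 (neg_nonpos.2 (mul_nonneg ht (hG0 p k)))
    simpa [hvdef] using mul_le_of_le_one_right (hαpos p).le this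
  have hv_sum : ∀ t k, 0 ≤ t → Summable (v t k) := fun t k ht =>
    hαsum.summable.of_nonneg_of_le (fun p => (hv_pos t k p).le) (fun p => hv_le t k p ht)
  set W : ℝ → ℕ → ℝ := fun t k => ∑' p, v t k p with hWdef
  have hW_pos : ∀ t k, 0 ≤ t → 0 < W t k := fun t k ht =>
    lt_of_lt_of_le (hv_pos t k p₀)
      ((hv_sum t k ht).le_tsum p₀ fun j _ => (hv_pos t k j).le)
  have hW_le1 : ∀ t k, 0 ≤ t → W t k ≤ 1 := by
    intro t k ht
    calc W t k ≤ ∑' p, α p :=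
          (hv_sum t k ht).tsum_le_tsum (fun p => hv_le t k p ht) hαsum.summable
      _ = 1 := hαsum.tsum_eq
  -- the normalized weights of the algorithm coincide with v/W
  have hLsum_split : ∀ n p, ∑ i ∈ Finset.range n, l (yE p i) (lam i) (x i)
      = G p n + n * a := by
    intro n p
    have : G p n = (∑ i ∈ Finset.range n, l (yE p i) (lam i) (x i)) - n * a := by
      simp [hGdef, hgdef, Finset.sum_sub_distrib, Finset.card_range, mul_comm]
    linarith
  have hqw : ∀ n p, w n p / (∑' p', w n p')
      = v (1 / Real.sqrt n) n p / W (1 / Real.sqrt n) n := by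
    intro n p
    have hsplit : ∀ p', w n p'
        = v (1 / Real.sqrt n) n p' * Real.exp (-((n : ℝ) * a) / Real.sqrt n) := by
      intro p'
      rw [hw n p', hLsum_split n p', hvdef]
      rw [mul_assoc, ← Real.exp_add]
      congr 2
      ring
    have hWw : (∑' p', w n p')
        = W (1 / Real.sqrt n) n * Real.exp (-((n : ℝ) * a) / Real.sqrt n) := by
      rw [hWdef]
      rw [← tsum_mul_right]
      exact tsum_congr hsplit
    rw [hWw, hsplit p, mul_div_mul_right _ _ (Real.exp_ne_zero _)]
  have hq_pos : ∀ (n : ℕ) (p : ℕ × ℕ), 0 < v (1 / Real.sqrt n) n p / W (1 / Real.sqrt n) n := by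
    intro n p
    exact div_pos (hv_pos _ n p) (hW_pos _ n (by positivity))
  have hq_hasSum : ∀ (n : ℕ), HasSum (fun p => v (1 / Real.sqrt n) n p / W (1 / Real.sqrt n) n) 1 := by
    intro n
    have ht : (0:ℝ) ≤ 1 / Real.sqrt n := by positivity
    have h1 := (hv_sum _ n ht).hasSum.div_const (W (1 / Real.sqrt n) n)
    rwa [div_self (hW_pos _ n ht).ne'] at h1
  -- the learner's point is the weighted average; Jensen
  have hzsum : ∀ (n : ℕ), Summable (fun p =>
      (v (1 / Real.sqrt n) n p / W (1 / Real.sqrt n) n) • yE p n) := by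
    intro n
    have ht : (0:ℝ) ≤ 1 / Real.sqrt n := by positivity
    refine Summable.of_norm_bounded
      (g := fun p => (v (1 / Real.sqrt n) n p / W (1 / Real.sqrt n) n) * M)
      (((hv_sum _ n ht).div_const _).mul_right M) (fun p => ?_)
    rw [norm_smul, Real.norm_eq_abs, abs_of_nonneg (hq_pos n p).le]
    exact mul_le_mul_of_nonneg_left (hM _ (hyE p n)) (hq_pos n p).le
  have hyn : ∀ (n : ℕ), HasSum (fun p =>
      (v (1 / Real.sqrt n) n p / W (1 / Real.sqrt n) n) • yE p n) (y n) := by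
    intro n
    have : y n = ∑' p, (v (1 / Real.sqrt n) n p / W (1 / Real.sqrt n) n) • yE p n := by
      rw [hy n]
      exact tsum_congr fun p => by rw [hqw n p]
    rw [this]
    exact (hzsum n).hasSum
  have hymem : ∀ n, y n ∈ Y := fun n =>
    waa_mem hYc.isClosed hYconv hYne (fun p => (hq_pos n p).le) (hq_hasSum n)
      (fun p => hyE p n) (hyn n)
  -- summability of expectations
  have hqbd_sum : ∀ (n : ℕ) (h : ℕ × ℕ → ℝ) (c : ℝ), (∀ p, |h p| ≤ c) →
      Summable (fun p => (v (1 / Real.sqrt n) n p / W (1 / Real.sqrt n) n) * h p) := by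
    intro n h c hc
    have ht : (0:ℝ) ≤ 1 / Real.sqrt n := by positivity
    refine Summable.of_norm_bounded
      (g := fun p => (v (1 / Real.sqrt n) n p / W (1 / Real.sqrt n) n) * c)
      (((hv_sum _ n ht).div_const _).mul_right c) (fun p => ?_)
    rw [Real.norm_eq_abs, abs_mul, abs_of_nonneg (hq_pos n p).le]
    exact mul_le_mul_of_nonneg_left (hc p) (hq_pos n p).le
  have habs : ∀ n p, |l (yE p n) (lam n) (x n)| ≤ |a| + |b| := by
    intro n p
    have h := hbdd _ (hyE p n) (lam n) (x n)
    rw [abs_le]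
    constructor
    · calc -(|a| + |b|) ≤ -|a| := by have := abs_nonneg b; linarith
        _ ≤ a := neg_abs_le a
        _ ≤ _ := h.1
    · exact h.2.trans ((le_abs_self b).trans (by have := abs_nonneg a; linarith))
  have hjen : ∀ (n : ℕ), l (y n) (lam n) (x n) ≤ ∑' p,
      (v (1 / Real.sqrt n) n p / W (1 / Real.sqrt n) n) * l (yE p n) (lam n) (x n) := by
    intro n
    exact waa_jensen hYc.isClosed hYconv hYne (hconv (lam n) (x n))
      (fun u hu => (hbdd u hu _ _).2) (hq_pos n) (hq_hasSum n)
      (fun p => hyE p n) (hyn n)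
      (hqbd_sum n _ (|a| + |b|) (habs n)).hasSum
  -- the potential function
  set φ : ℕ → ℝ := fun k => -Real.sqrt k * Real.log (W (1 / Real.sqrt k) k) with hφdef
  have hφ0 : φ 0 = 0 := by simp [hφdef]
  have hφ1 : 0 ≤ φ 1 := by
    simp only [hφdef, Nat.cast_one]
    have h1 : W (1 / Real.sqrt 1) 1 ≤ 1 := hW_le1 _ 1 (by positivity)
    have h2 : 0 < W (1 / Real.sqrt 1) 1 := hW_pos _ 1 (by positivity)
    have h3 := Real.log_nonpos h2.le h1
    nlinarith [Real.sqrt_nonneg (1:ℝ)]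
  -- key per-round estimate for n ≥ 1
  have key : ∀ (n : ℕ), 1 ≤ n →
      l (y n) (lam n) (x n) - a ≤ φ (n+1) - φ n + B^2 * (1 / Real.sqrt n) := by
    intro n hn
    have hsn : 0 < Real.sqrt n := Real.sqrt_pos.2 (by exact_mod_cast Nat.pos_of_ne_zero (by omega))
    set t : ℝ := 1 / Real.sqrt n with htdef
    have ht0 : 0 < t := by positivity
    have hts : Real.sqrt n * t = 1 := by rw [htdef]; field_simp
    set Q : ℕ × ℕ → ℝ := fun p => v t n p / W t n with hQdef
    have hQpos : ∀ p, 0 < Q p := hq_pos n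
    have hQsum : HasSum Q 1 := hq_hasSum n
    set Eg : ℝ := ∑' p, Q p * g n p with hEgdef
    set Eg2 : ℝ := ∑' p, Q p * (g n p)^2 with hEg2def
    have hsum_g : Summable (fun p => Q p * g n p) := by
      refine hqbd_sum n _ B (fun p => ?_)
      rw [abs_of_nonneg (hg0 n p)]; exact hgB n p
    have hsum_g2 : Summable (fun p => Q p * (g n p)^2) := by
      refine hqbd_sum n _ (B^2) (fun p => ?_)
      rw [abs_of_nonneg (sq_nonneg _)]
      exact pow_le_pow_left₀ (hg0 n p) (hgB n p) 2
    have hEg_0 : 0 ≤ Eg := tsum_nonneg fun p => mul_nonneg (hQpos p).le (hg0 n p)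
    have hEg2_B : Eg2 ≤ B^2 := by
      rw [hEg2def]
      calc ∑' p, Q p * (g n p)^2 ≤ ∑' p, Q p * B^2 := by
            refine hsum_g2.tsum_le_tsum (fun p => ?_) (hQsum.summable.mul_right _)
            exact mul_le_mul_of_nonneg_left
              (pow_le_pow_left₀ (hg0 n p) (hgB n p) 2) (hQpos p).le
        _ = B^2 := by rw [tsum_mul_right, hQsum.tsum_eq, one_mul]
    have hEg2_0 : 0 ≤ Eg2 := tsum_nonneg fun p => mul_nonneg (hQpos p).le (sq_nonneg _)
    have hve : ∀ p, v t n p * Real.exp (-(t * g n p)) = v t (n+1) p := by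
      intro p
      simp only [hvdef, hGdef, Finset.sum_range_succ]
      rw [mul_assoc, ← Real.exp_add]
      congr 2
      ring
    have hEe_eq : ∑' p, Q p * Real.exp (-(t * g n p)) = W t (n+1) / W t n := by
      have h1 : ∀ p, Q p * Real.exp (-(t * g n p)) = v t (n+1) p / W t n := by
        intro p
        rw [hQdef, div_mul_eq_mul_div, hve p]
      rw [tsum_congr h1, tsum_div_const]
    have hW1pos : 0 < W t n := hW_pos t n ht0.le
    have hW2pos : 0 < W t (n+1) := hW_pos t (n+1) ht0.le
    have hEe_pos : 0 < ∑' p, Q p * Real.exp (-(t * g n p)) := by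
      rw [hEe_eq]; exact div_pos hW2pos hW1pos
    have hsum_e : Summable (fun p => Q p * Real.exp (-(t * g n p))) := by
      refine hqbd_sum n _ 1 (fun p => ?_)
      rw [abs_of_nonneg (Real.exp_pos _).le]
      exact Real.exp_le_one_iff.2 (neg_nonpos.2 (mul_nonneg ht0.le (hg0 n p)))
    have hsum_quad : Summable (fun p => Q p * (1 - t * g n p + (t * g n p)^2)) := by
      refine hqbd_sum n _ (1 + t * B + (t*B)^2) (fun p => ?_)
      have h1 : 0 ≤ t * g n p := mul_nonneg ht0.le (hg0 n p)
      have h2 : t * g n p ≤ t * B := mul_le_mul_of_nonneg_left (hgB n p) ht0.le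
      rw [abs_le]
      constructor <;> nlinarith [sq_nonneg (t * g n p), sq_nonneg (t*B)]
    have hquad_eq : ∑' p, Q p * (1 - t * g n p + (t * g n p)^2)
        = 1 - t * Eg + t^2 * Eg2 := by
      have h1 : ∀ p, Q p * (1 - t * g n p + (t * g n p)^2)
          = (Q p - t * (Q p * g n p)) + t^2 * (Q p * (g n p)^2) := fun p => by ring
      rw [tsum_congr h1,
        Summable.tsum_add (hQsum.summable.sub (hsum_g.mul_left t)) (hsum_g2.mul_left (t^2)),
        Summable.tsum_sub hQsum.summable (hsum_g.mul_left t),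
        tsum_mul_left, tsum_mul_left, hQsum.tsum_eq, hEgdef, hEg2def]
    have hEe_le : ∑' p, Q p * Real.exp (-(t * g n p))
        ≤ Real.exp (-(t*Eg) + t^2 * Eg2) := by
      calc ∑' p, Q p * Real.exp (-(t * g n p))
          ≤ ∑' p, Q p * (1 - t * g n p + (t * g n p)^2) := by
            refine hsum_e.tsum_le_tsum (fun p => ?_) hsum_quad
            exact mul_le_mul_of_nonneg_left
              (waa_exp_quad (mul_nonneg ht0.le (hg0 n p))) (hQpos p).le
        _ = 1 - t * Eg + t^2 * Eg2 := hquad_eq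
        _ ≤ Real.exp (-(t*Eg) + t^2 * Eg2) := by
            have := Real.add_one_le_exp (-(t*Eg) + t^2 * Eg2)
            linarith
    have hlog : Real.log (W t (n+1)) - Real.log (W t n) ≤ -(t*Eg) + t^2 * Eg2 := by
      have h1 : Real.log (∑' p, Q p * Real.exp (-(t * g n p)))
          ≤ -(t*Eg) + t^2 * Eg2 := by
        calc Real.log (∑' p, Q p * Real.exp (-(t * g n p)))
            ≤ Real.log (Real.exp (-(t*Eg) + t^2 * Eg2)) :=
              (Real.log_le_log_iff hEe_pos (Real.exp_pos _)).2 hEe_le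
          _ = -(t*Eg) + t^2 * Eg2 := Real.log_exp _
      rwa [hEe_eq, Real.log_div hW2pos.ne' hW1pos.ne'] at h1
    have hEg_le : Eg ≤ Real.sqrt n * Real.log (W t n)
        - Real.sqrt n * Real.log (W t (n+1)) + B^2 * t := by
      have h2 : t * Eg ≤ Real.log (W t n) - Real.log (W t (n+1)) + t^2 * Eg2 := by
        linarith
      have h3 := mul_le_mul_of_nonneg_left h2 (Real.sqrt_nonneg (n:ℕ))
      have h4 : Real.sqrt n * (t * Eg) = Eg := by rw [← mul_assoc, hts, one_mul]
      have h6 : Real.sqrt n * (Real.log (W t n) - Real.log (W t (n+1)) + t^2 * Eg2)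
          = Real.sqrt n * Real.log (W t n) - Real.sqrt n * Real.log (W t (n+1))
            + (Real.sqrt n * t) * (t * Eg2) := by ring
      rw [h4, h6, hts, one_mul] at h3
      have h8 : t * Eg2 ≤ B^2 * t := by
        rw [mul_comm (B^2) t]
        exact mul_le_mul_of_nonneg_left hEg2_B ht0.le
      linarith
    -- power mean comparison step
    have hpm : -Real.sqrt n * Real.log (W t (n+1)) ≤ φ (n+1) := by
      have hcast : ((n+1 : ℕ):ℝ) = (n:ℝ)+1 := by push_cast; ring
      set t' : ℝ := 1 / Real.sqrt ((n:ℝ)+1) with ht'def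
      have hsn1 : 0 < Real.sqrt ((n:ℝ)+1) := Real.sqrt_pos.2 (by positivity)
      have ht'0 : 0 < t' := by positivity
      set θ : ℝ := Real.sqrt n / Real.sqrt ((n:ℝ)+1) with hθdef
      have hθ0 : 0 < θ := div_pos hsn hsn1
      have hθ1 : θ ≤ 1 := by
        rw [hθdef, div_le_one hsn1]
        exact Real.sqrt_le_sqrt (by linarith)
      have hu0 : ∀ p, 0 ≤ Real.exp (-(t * G p (n+1))) := fun p => (Real.exp_pos _).le
      have hu1 : ∀ p, Real.exp (-(t * G p (n+1))) ≤ 1 := fun p =>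
        Real.exp_le_one_iff.2 (neg_nonpos.2 (mul_nonneg ht0.le (hG0 p (n+1))))
      have httheta : t * θ = t' := by
        rw [htdef, hθdef, ht'def]
        field_simp
      have hupow : ∀ p, Real.exp (-(t * G p (n+1))) ^ θ
          = Real.exp (-(t' * G p (n+1))) := by
        intro p
        rw [← Real.exp_mul]
        congr 1
        rw [← httheta]
        ring
      have hpow := waa_pow (fun p => (hαpos p).le) hαsum hu0 hu1 hθ0 hθ1
      have hWid1 : ∑' p, α p * Real.exp (-(t * G p (n+1))) = W t (n+1) := rfl
      have hWid2 : ∑' p, α p * Real.exp (-(t * G p (n+1))) ^ θ = W t' (n+1) := by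
        rw [tsum_congr (fun p => by rw [hupow p])]
      rw [hWid1, hWid2] at hpow
      -- hpow : W t' (n+1) ≤ W t (n+1) ^ θ
      have hW'pos : 0 < W t' (n+1) := hW_pos t' (n+1) ht'0.le
      have hlog2 : Real.log (W t' (n+1)) ≤ θ * Real.log (W t (n+1)) := by
        have h1 := (Real.log_le_log_iff hW'pos
          (Real.rpow_pos_of_pos hW2pos θ)).2 hpow
        rwa [Real.log_rpow hW2pos] at h1
      have h2 := mul_le_mul_of_nonneg_left hlog2 hsn1.le
      have h3 : Real.sqrt ((n:ℝ)+1) * (θ * Real.log (W t (n+1)))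
          = Real.sqrt n * Real.log (W t (n+1)) := by
        rw [hθdef, ← mul_assoc, mul_div_cancel₀ _ hsn1.ne']
      rw [h3] at h2
      have hφn1 : φ (n+1) = -Real.sqrt ((n:ℝ)+1)
          * Real.log (W (1/Real.sqrt ((n:ℝ)+1)) (n+1)) := by
        simp only [hφdef, hcast]
      rw [hφn1, ← ht'def]
      linarith
    -- combine
    have hsplitE : ∑' p, Q p * l (yE p n) (lam n) (x n) = Eg + a := by
      have h1 : ∀ p, Q p * l (yE p n) (lam n) (x n) = Q p * g n p + a * Q p := by
        intro p; simp only [hgdef]; ring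
      rw [tsum_congr h1, Summable.tsum_add hsum_g (hQsum.summable.mul_left a),
        tsum_mul_left, hQsum.tsum_eq, mul_one, hEgdef]
    have hmain := hjen n
    rw [hsplitE] at hmain
    have hφn : φ n = -Real.sqrt n * Real.log (W t n) := by
      simp only [hφdef, htdef]
    have hBt : B^2 * (1 / Real.sqrt (n:ℕ)) = B^2 * t := by rw [htdef]
    linarith [hEg_le, hpm]
  -- choose the constant
  have hα1 : α p₀ ≤ 1 := le_hasSum hαsum p₀ fun j _ => (hαpos j).le
  have hlogα : 0 ≤ -Real.log (α p₀) :=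
    neg_nonneg.2 (Real.log_nonpos (hαpos p₀).le hα1)
  refine ⟨B + 2 * B^2 + -Real.log (α p₀), ?_⟩
  intro N hN
  have hsN : 0 < Real.sqrt N :=
    Real.sqrt_pos.2 (by exact_mod_cast Nat.pos_of_ne_zero (by omega))
  have hsN1 : 1 ≤ Real.sqrt N := by
    rw [show (1:ℝ) = Real.sqrt 1 from (Real.sqrt_one).symm]
    exact Real.sqrt_le_sqrt (by exact_mod_cast hN)
  -- cumulative bound
  set r : ℕ → ℝ := fun i => if i = 0 then B else B^2 * (1/Real.sqrt i) with hrdef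
  have hsum_bound : ∑ i ∈ Finset.range N, (l (y i) (lam i) (x i) - a)
      ≤ φ N + (B + 2 * B^2 * Real.sqrt N) := by
    have hpt : ∀ i, l (y i) (lam i) (x i) - a ≤ (φ (i+1) - φ i) + r i := by
      intro i
      rcases Nat.eq_zero_or_pos i with rfl | hi
      · have h1 : l (y 0) (lam 0) (x 0) ≤ b := (hbdd _ (hymem 0) _ _).2
        have h2 : r 0 = B := by simp [hrdef]
        rw [h2, hφ0]
        have : B = b - a := hBdef
        linarith [hφ1]
      · have h1 := key i hi
        have h2 : r i = B^2 * (1/Real.sqrt i) := by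
          simp only [hrdef]
          rw [if_neg (by omega)]
        linarith
    have hrsum : ∑ i ∈ Finset.range N, r i ≤ B + 2*B^2*Real.sqrt N := by
      obtain ⟨M', rfl⟩ : ∃ M', N = M' + 1 := ⟨N-1, by omega⟩
      rw [Finset.sum_range_succ']
      have h0 : r 0 = B := by simp [hrdef]
      have h2 : ∑ i ∈ Finset.range M', r (i+1)
          = B^2 * ∑ i ∈ Finset.range M', 1/Real.sqrt ((i:ℝ)+1) := by
        rw [Finset.mul_sum]
        refine Finset.sum_congr rfl fun i _ => ?_
        simp only [hrdef]
        rw [if_neg (by omega)]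
        push_cast
        ring_nf
      rw [h0, h2]
      have h3 := waa_sqrt_sum M'
      have h4 : Real.sqrt (M':ℝ) ≤ Real.sqrt ((M':ℝ)+1) :=
        Real.sqrt_le_sqrt (by linarith)
      have h5 : B^2 * ∑ i ∈ Finset.range M', 1/Real.sqrt ((i:ℝ)+1)
          ≤ B^2 * (2 * Real.sqrt (M':ℝ)) :=
        mul_le_mul_of_nonneg_left h3 (sq_nonneg B)
      have h6 : ((M' + 1 : ℕ) : ℝ) = (M':ℝ) + 1 := by push_cast; ring
      have h7 : B^2 * (2 * Real.sqrt (M':ℝ)) ≤ B^2 * (2 * Real.sqrt ((M':ℝ)+1)) :=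
        mul_le_mul_of_nonneg_left (by linarith) (sq_nonneg B)
      have h8 := h5.trans h7
      have h9 : B^2 * (2 * Real.sqrt ((M':ℝ)+1)) = 2*B^2*Real.sqrt ((M':ℝ)+1) := by
        ring
      rw [h6]
      linarith
    calc ∑ i ∈ Finset.range N, (l (y i) (lam i) (x i) - a)
        ≤ ∑ i ∈ Finset.range N, ((φ (i+1) - φ i) + r i) :=
          Finset.sum_le_sum fun i _ => hpt i
      _ = (φ N - φ 0) + ∑ i ∈ Finset.range N, r i := by
          rw [Finset.sum_add_distrib, Finset.sum_range_sub]
      _ ≤ φ N + (B + 2 * B^2 * Real.sqrt N) := by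
          rw [hφ0, sub_zero]
          linarith
  -- bound on the potential at time N
  have hφN : φ N ≤ G p₀ N + -Real.sqrt N * Real.log (α p₀) := by
    set tN : ℝ := 1 / Real.sqrt N with htNdef
    have htN0 : 0 < tN := by positivity
    have hWNpos : 0 < W tN N := hW_pos tN N htN0.le
    have hvW : v tN N p₀ ≤ W tN N :=
      (hv_sum tN N htN0.le).le_tsum p₀ fun j _ => (hv_pos tN N j).le
    have hlog1 : Real.log (α p₀) + -(tN * G p₀ N) ≤ Real.log (W tN N) := by
      have h1 := (Real.log_le_log_iff (hv_pos tN N p₀) hWNpos).2 hvW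
      rw [hvdef] at h1
      simp only at h1
      rwa [Real.log_mul (hαpos p₀).ne' (Real.exp_ne_zero _), Real.log_exp] at h1
    have h3 : -Real.sqrt N * Real.log (W tN N)
        ≤ -Real.sqrt N * (Real.log (α p₀) + -(tN * G p₀ N)) :=
      mul_le_mul_of_nonpos_left hlog1 (by linarith)
    have h5 : Real.sqrt N * tN = 1 := by rw [htNdef]; field_simp
    have h4 : -Real.sqrt N * (Real.log (α p₀) + -(tN * G p₀ N))
        = -Real.sqrt N * Real.log (α p₀) + (Real.sqrt N * tN) * G p₀ N := by ring
    have hφNdef : φ N = -Real.sqrt N * Real.log (W tN N) := by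
      simp only [hφdef, htNdef]
    rw [hφNdef]
    calc -Real.sqrt N * Real.log (W tN N)
        ≤ -Real.sqrt N * (Real.log (α p₀) + -(tN * G p₀ N)) := h3
      _ = -Real.sqrt N * Real.log (α p₀) + (Real.sqrt N * tN) * G p₀ N := h4
      _ = G p₀ N + -Real.sqrt N * Real.log (α p₀) := by rw [h5]; ring
  -- put things together
  have hGN : G p₀ N = (∑ i ∈ Finset.range N, l (yE p₀ i) (lam i) (x i)) - N * a := by
    have := hLsum_split N p₀; linarith
  have hsum_l : ∑ i ∈ Finset.range N, (l (y i) (lam i) (x i) - a)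
      = (∑ i ∈ Finset.range N, l (y i) (lam i) (x i)) - N * a := by
    rw [Finset.sum_sub_distrib, Finset.sum_const, Finset.card_range, nsmul_eq_mul]
  have hfinal : ∑ i ∈ Finset.range N, l (y i) (lam i) (x i)
      ≤ (∑ i ∈ Finset.range N, l (yE p₀ i) (lam i) (x i))
        + (B + 2*B^2 + -Real.log (α p₀)) * Real.sqrt N := by
    have h1 := hsum_bound
    rw [hsum_l] at h1
    have hBB : B ≤ B * Real.sqrt N := le_mul_of_one_le_right hB0 hsN1
    have hLL : -Real.log (α p₀) ≤ -Real.log (α p₀) * Real.sqrt N :=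
      le_mul_of_one_le_right hlogα hsN1
    have hexp : (B + 2*B^2 + -Real.log (α p₀)) * Real.sqrt N
        = B * Real.sqrt N + 2*B^2*Real.sqrt N + -Real.log (α p₀) * Real.sqrt N := by
      ring
    have hfl : -Real.sqrt (N:ℝ) * Real.log (α p₀) = -Real.log (α p₀) * Real.sqrt N := by
      ring
    rw [hexp]
    rw [hfl] at hφN
    linarith [hφN, hGN]
  -- divide by N
  have hNpos : (0:ℝ) < N := by exact_mod_cast (by omega : 0 < N)
  have hdiv : (1/(N:ℝ)) * ((B + 2*B^2 + -Real.log (α p₀)) * Real.sqrt N)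
      = (B + 2*B^2 + -Real.log (α p₀)) / Real.sqrt N := by
    have hNs : Real.sqrt N * Real.sqrt N = (N:ℝ) := Real.mul_self_sqrt hNpos.le
    field_simp
    nlinarith [hNs]
  have hmul := mul_le_mul_of_nonneg_left hfinal (by positivity : (0:ℝ) ≤ 1/(N:ℝ))
  rw [mul_add, hdiv] at hmul
  exact hmul
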